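/- Let R be a ring, Σ a set of injective maps between finitely generated projective right R-modules, and M a finitely presented R-module of projective dimension at most 1. Then Hom_R(M, X) = 0 and Ext¹_R(M, X) = 0 for every R_Σ-module X if and only if M ⊗_R R_Σ = 0 and Tor₁^R(M, R_Σ) = 0. -/

import Mathlib

open CategoryTheory CategoryTheory.Limits

universe u

variable {R : Type u} [Ring R]

/-- A ring homomorphism `f : R →+* S` inverts a map `α : P ⟶ Q` of right `R`-modules if
`α ⊗_R S` is an isomorphism; equivalently, for every `S`-module `X` (viewed as an
`R`-module via `f`), composition with `α` gives a bijection `Hom_R(Q, X) → Hom_R(P, X)`. -/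
def RingHom.Inverts {S : Type u} [Ring S] (f : R →+* S)
    {P Q : ModuleCat.{u} R} (α : P ⟶ Q) : Prop :=
  ∀ (X : Type u) [AddCommGroup X] [Module S X],
    letI : Module R X := Module.compHom X f
    Function.Bijective (fun g : ↥Q →ₗ[R] X => g.comp (α.hom : ↥P →ₗ[R] ↥Q))

/-- `f : R →+* S` is the universal localization of `R` at a set `Sig` of maps between
finitely generated projective right `R`-modules. -/
structure IsUniversalLocalization {S : Type u} [Ring S] (f : R →+* S)
    (Sig : CategoryTheory.MorphismProperty (ModuleCat.{u} R)) : Prop where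
  inverts : ∀ ⦃P Q : ModuleCat.{u} R⦄ (α : P ⟶ Q), Sig α → f.Inverts α
  universal : ∀ (T : Type u) (_ : Ring T) (g : R →+* T),
    (∀ ⦃P Q : ModuleCat.{u} R⦄ (α : P ⟶ Q), Sig α → g.Inverts α) →
    ∃! h : S →+* T, h.comp f = g

namespace ULocAux
open ZeroObject
noncomputable section
variable {C : Type*} [Category C] [Abelian C]

/-- The two-term chain complex `… → 0 → P → Q` from a map `i : P ⟶ Q`. -/
def twoComplex {P Q : C} (i : P ⟶ Q) : ChainComplex C ℕ :=
  ChainComplex.of (fun n => match n with | 0 => Q | 1 => P | _ + 2 => 0)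
    (fun n => match n with | 0 => i | _ + 1 => 0)
    (fun n => match n with | 0 => zero_comp | _ + 1 => zero_comp)

@[simp] lemma twoComplex_X0 {P Q : C} (i : P ⟶ Q) : (twoComplex i).X 0 = Q := rfl
@[simp] lemma twoComplex_X1 {P Q : C} (i : P ⟶ Q) : (twoComplex i).X 1 = P := rfl
lemma twoComplex_isZero_X {P Q : C} (i : P ⟶ Q) (n : ℕ) : IsZero ((twoComplex i).X (n + 2)) :=
  isZero_zero C

@[simp] lemma twoComplex_d10 {P Q : C} (i : P ⟶ Q) : (twoComplex i).d 1 0 = i :=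
  by simp only [twoComplex, ChainComplex.of]; exact ChainComplex.of_d _ _ 0

lemma twoComplex_d_succ {P Q : C} (i : P ⟶ Q) (n : ℕ) :
    (twoComplex i).d (n + 2) (n + 1) = 0 :=
  (twoComplex_isZero_X i n).eq_of_src _ _

lemma twoComplex_exactAt_succ {P Q : C} (i : P ⟶ Q) (hi : Mono i) (n : ℕ) :
    (twoComplex i).ExactAt (n + 1) := by
  rw [HomologicalComplex.exactAt_iff' _ (n + 2) (n + 1) n (by simp) (by simp)]
  match n with
  | 0 =>
    rw [ShortComplex.exact_iff_mono _ (twoComplex_d_succ i 0)]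
    simp
    exact hi
  | n + 1 => exact ShortComplex.exact_of_isZero_X₂ _ (twoComplex_isZero_X i n)

/-- The two-term projective resolution attached to a short exact sequence `0 → P → Q → M → 0`
with `P` and `Q` projective. -/
def twoResolution {P Q M : C} (i : P ⟶ Q) (π₀ : Q ⟶ M) (h0 : i ≫ π₀ = 0)
    [Projective P] [Projective Q] (hmono : Mono i)
    (hexact : (ShortComplex.mk i π₀ h0).Exact) (hepi : Epi π₀) :
    ProjectiveResolution M where
  complex := twoComplex i
  projective n := by
    match n with
    | 0 => dsimp [twoComplex]; infer_instance
    | 1 => dsimp [twoComplex]; infer_instance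
    | n + 2 => exact (twoComplex_isZero_X i n).projective
  π := (ChainComplex.toSingle₀Equiv _ _).symm ⟨π₀, by simp; exact h0⟩
  quasiIso := ⟨fun n => by
    cases n with
    | zero =>
      rw [ChainComplex.quasiIsoAt₀_iff, ShortComplex.quasiIso_iff_of_zeros']
      · refine (ShortComplex.exact_and_epi_g_iff_of_iso ?_).2 ⟨hexact, hepi⟩
        exact ShortComplex.isoMk (Iso.refl _) (Iso.refl _) (Iso.refl _)
          (by simp; erw [Category.id_comp, Category.comp_id])
          (by simp; erw [Category.id_comp, Category.comp_id, ChainComplex.toSingle₀Equiv_symm_apply_f_zero])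
      all_goals rfl
    | succ n =>
      rw [quasiIsoAt_iff_exactAt']
      · exact twoComplex_exactAt_succ i hmono n
      · apply ChainComplex.exactAt_succ_single_obj⟩

variable {D : Type*} [Category D] [Abelian D]

lemma isZero_leftDerived_one_iff {P Q M : C} (i : P ⟶ Q) (π₀ : Q ⟶ M) (h0 : i ≫ π₀ = 0)
    [Projective P] [Projective Q] (hmono : Mono i)
    (hexact : (ShortComplex.mk i π₀ h0).Exact) (hepi : Epi π₀)
    [EnoughProjectives C] (F : C ⥤ D) [F.Additive] :
    IsZero ((F.leftDerived 1).obj M) ↔ Mono (F.map i) := by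
  let res := twoResolution i π₀ h0 hmono hexact hepi
  rw [(res.isoLeftDerivedObj F 1).isZero_iff]
  change IsZero (((F.mapHomologicalComplex _).obj (twoComplex i)).homology 1) ↔ _
  rw [← HomologicalComplex.exactAt_iff_isZero_homology,
    HomologicalComplex.exactAt_iff' _ 2 1 0 (by simp) (by simp),
    ShortComplex.exact_iff_mono _ (by simp [twoComplex_d_succ i 0]; exact F.map_zero _ _)]
  have : (((F.mapHomologicalComplex _).obj (twoComplex i)).sc' 2 1 0).g = F.map i := by
    simp [HomologicalComplex.sc', HomologicalComplex.shortComplexFunctor']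
    rfl
  rw [this]
  exact Iff.rfl

lemma isZero_Ext_one_iff {P Q M : C} (i : P ⟶ Q) (π₀ : Q ⟶ M) (h0 : i ≫ π₀ = 0)
    [Projective P] [Projective Q] (hmono : Mono i)
    (hexact : (ShortComplex.mk i π₀ h0).Exact) (hepi : Epi π₀)
    [Linear ℤ C] [EnoughProjectives C] (Y : C) :
    IsZero (((Ext ℤ C 1).obj (Opposite.op M)).obj Y) ↔
      Function.Surjective (fun h : Q ⟶ Y => i ≫ h) := by
  let res := twoResolution i π₀ h0 hmono hexact hepi
  rw [(res.isoExt 1 Y).isZero_iff]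
  change IsZero (((twoComplex i).linearYonedaObj ℤ Y).homology 1) ↔ _
  have hz : IsZero (((twoComplex i).linearYonedaObj ℤ Y).X 2) := by
    haveI : Subsingleton (((twoComplex i).linearYonedaObj ℤ Y).X 2) :=
      ⟨fun a b => (twoComplex_isZero_X i 0).eq_of_src a b⟩
    exact ModuleCat.isZero_of_subsingleton _
  rw [← HomologicalComplex.exactAt_iff_isZero_homology,
    HomologicalComplex.exactAt_iff' _ 0 1 2 (by simp) (by simp),
    ShortComplex.exact_iff_epi _ (hz.eq_of_tgt _ _)]
  have hf : ((((twoComplex i).linearYonedaObj ℤ Y).sc' 0 1 2).f : _ ⟶ _) =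
      ((linearYoneda ℤ C).obj Y).map ((twoComplex i).d 1 0).op := by
    simp [HomologicalComplex.sc', HomologicalComplex.shortComplexFunctor',
      ChainComplex.linearYonedaObj]
    rfl
  rw [ModuleCat.epi_iff_surjective]
  erw [hf]
  simp only [twoComplex_d10]
  rfl

lemma isZero_obj_iff {P Q M : C} (i : P ⟶ Q) (e : cokernel i ≅ M) (F : C ⥤ D) [F.Additive]
    [PreservesColimit (parallelPair i 0) F] :
    IsZero (F.obj M) ↔ Epi (F.map i) := by
  rw [(F.mapIso e.symm ≪≫ PreservesCokernel.iso F i).isZero_iff]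
  constructor
  · exact fun h => Preadditive.epi_of_isZero_cokernel _ h
  · intro h
    exact (isZero_zero D).of_iso (cokernel.ofEpi (F.map i))

lemma isIso_iff_precomp_bijective {A B : D} (g : A ⟶ B) :
    IsIso g ↔ ∀ X : D, Function.Bijective (fun h : B ⟶ X => g ≫ h) := by
  constructor
  · intro hg X
    exact ⟨fun h₁ h₂ hh => by simpa using congrArg (fun t => inv g ≫ t) hh,
      fun u => ⟨inv g ≫ u, by simp⟩⟩
  · intro hb
    obtain ⟨k, hk⟩ := (hb A).2 (𝟙 A)
    dsimp at hk
    refine ⟨k, hk, (hb B).1 ?_⟩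
    dsimp
    rw [← Category.assoc, hk, Category.id_comp, Category.comp_id]

lemma hom_zero_iff {P Q M : C} (i : P ⟶ Q) (e : cokernel i ≅ M) (Y : C) :
    (∀ g : M ⟶ Y, g = 0) ↔ Function.Injective (fun h : Q ⟶ Y => i ≫ h) := by
  constructor
  · intro hz h₁ h₂ hh
    dsimp at hh
    have w : i ≫ (h₁ - h₂) = 0 := by rw [Preadditive.comp_sub, hh, sub_self]
    have hd : cokernel.desc i (h₁ - h₂) w = 0 := by
      have := hz (e.inv ≫ cokernel.desc i (h₁ - h₂) w)
      rw [← Iso.hom_inv_id_assoc e (cokernel.desc i (h₁ - h₂) w), this, Limits.comp_zero]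
    have := cokernel.π_desc i (h₁ - h₂) w
    rw [hd, Limits.comp_zero] at this
    exact sub_eq_zero.1 this.symm
  · intro hinj g
    have : Epi (cokernel.π i ≫ e.hom) := epi_comp _ _
    rw [← cancel_epi (cokernel.π i ≫ e.hom), Limits.comp_zero]
    apply hinj
    simp [cokernel.condition_assoc]

lemma bijective_precomp_iff {P Q : C} {F : C ⥤ D} {G : D ⥤ C} (adj : F ⊣ G)
    (i : P ⟶ Q) (X : D) :
    Function.Bijective (fun h : Q ⟶ G.obj X => i ≫ h) ↔
      Function.Bijective (fun u : F.obj Q ⟶ X => F.map i ≫ u) := by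
  have : (fun h : Q ⟶ G.obj X => i ≫ h) =
      (adj.homEquiv P X) ∘ (fun u : F.obj Q ⟶ X => F.map i ≫ u) ∘ (adj.homEquiv Q X).symm := by
    funext h
    dsimp
    rw [adj.homEquiv_naturality_left, Equiv.apply_symm_apply]
  rw [this, Equiv.comp_bijective, Equiv.bijective_comp]

end
end ULocAux

open ULocAux in
/-- Let `Sig` be a set of injective maps between finitely generated projective right
`R`-modules, `f : R →+* R_Σ` its universal localization, and let `F = - ⊗_R R_Σ` be the
induction functor (the left adjoint to restriction of scalars), so that
`Tor_i^R(-, R_Σ)` is its `i`-th left derived functor.  Let `M` be a finitely presented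
`R`-module of projective dimension at most 1.  Then `Hom_R(M, X) = 0` and
`Ext¹_R(M, X) = 0` for every `R_Σ`-module `X` if and only if
`M ⊗_R R_Σ = 0` and `Tor₁^R(M, R_Σ) = 0`. -/
theorem hom_ext_vanish_iff_tensor_tor_vanish
    {S : Type u} [Ring S] (f : R →+* S)
    (Sig : CategoryTheory.MorphismProperty (ModuleCat.{u} R))
    (hSig : ∀ ⦃P Q : ModuleCat.{u} R⦄ (α : P ⟶ Q), Sig α →
      Module.Finite R P ∧ Module.Projective R P ∧ Module.Finite R Q ∧
        Module.Projective R Q ∧ Function.Injective α)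
    (hf : IsUniversalLocalization f Sig)
    (F : ModuleCat.{u} R ⥤ ModuleCat.{u} S) [F.Additive]
    (adj : F ⊣ ModuleCat.restrictScalars f)
    (M : ModuleCat.{u} R) (hM : Module.FinitePresentation R M)
    (hpd : ∃ (P Q : ModuleCat.{u} R) (i : P ⟶ Q),
      Module.Finite R P ∧ Module.Projective R P ∧ Module.Finite R Q ∧
        Module.Projective R Q ∧ Function.Injective i ∧ Nonempty (cokernel i ≅ M)) :
    ((∀ (X : ModuleCat.{u} S) (g : M ⟶ (ModuleCat.restrictScalars f).obj X), g = 0) ∧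
      (∀ (X : ModuleCat.{u} S),
        IsZero (((Ext ℤ (ModuleCat.{u} R) 1).obj (Opposite.op M)).obj
          ((ModuleCat.restrictScalars f).obj X)))) ↔
    (IsZero (F.obj M) ∧ IsZero ((F.leftDerived 1).obj M)) := by
  obtain ⟨P, Q, i, -, hPp, -, hQp, hinj, ⟨e⟩⟩ := hpd
  haveI : Projective P := (IsProjective.iff_projective (R := R) P).mp hPp
  haveI : Projective Q := (IsProjective.iff_projective (R := R) Q).mp hQp
  haveI hmono : Mono i := (ModuleCat.mono_iff_injective i).2 hinj
  haveI : PreservesColimitsOfSize F := adj.leftAdjoint_preservesColimits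
  set π₀ : Q ⟶ M := cokernel.π i ≫ e.hom with hπ₀
  have h0 : i ≫ π₀ = 0 := by simp [hπ₀, cokernel.condition_assoc]
  have hexact : (ShortComplex.mk i π₀ h0).Exact := by
    have hco : (ShortComplex.mk i (cokernel.π i) (cokernel.condition i)).Exact :=
      ShortComplex.exact_of_g_is_cokernel _ (cokernelIsCokernel i)
    have φ : ShortComplex.mk i (cokernel.π i) (cokernel.condition i) ≅ ShortComplex.mk i π₀ h0 :=
      ShortComplex.isoMk (Iso.refl _) (Iso.refl _) e (by simp) (by simp [hπ₀])
    exact (ShortComplex.exact_iff_of_iso φ).1 hco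
  haveI hepi : Epi π₀ := epi_comp _ _
  have step1 : (∀ (X : ModuleCat.{u} S) (g : M ⟶ (ModuleCat.restrictScalars f).obj X), g = 0) ∧
      (∀ (X : ModuleCat.{u} S),
        IsZero (((Ext ℤ (ModuleCat.{u} R) 1).obj (Opposite.op M)).obj
          ((ModuleCat.restrictScalars f).obj X))) ↔
      ∀ (X : ModuleCat.{u} S),
        Function.Bijective (fun h : Q ⟶ (ModuleCat.restrictScalars f).obj X => i ≫ h) := by
    rw [← forall_and]
    refine forall_congr' fun X => ?_
    rw [hom_zero_iff i e, isZero_Ext_one_iff i π₀ h0 hmono hexact hepi]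
    exact Iff.rfl
  rw [step1]
  have step2 : (∀ (X : ModuleCat.{u} S),
      Function.Bijective (fun h : Q ⟶ (ModuleCat.restrictScalars f).obj X => i ≫ h)) ↔
      IsIso (F.map i) := by
    rw [isIso_iff_precomp_bijective (F.map i)]
    exact forall_congr' fun X => bijective_precomp_iff adj i X
  rw [step2, isIso_iff_mono_and_epi, ← isZero_obj_iff i e F,
    ← isZero_leftDerived_one_iff i π₀ h0 hmono hexact hepi F, and_comm]
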